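/- Let X be a real normed linear space, a ∈ X with ‖a‖ = 1, and x₁,…,xₙ nonzero vectors with ‖xⱼ − a‖ ≤ 1 for each j. For pⱼ ≥ 0 with Σpⱼ = 1 and Σpⱼ‖xⱼ‖ > 0: ‖Σⱼ pⱼ•xⱼ‖/(Σⱼ pⱼ‖xⱼ‖) ≥ (1/2)·min_j (1 − ‖xⱼ − a‖²)/‖xⱼ‖. -/

import Mathlib

theorem stmt10 {X : Type*} [NormedAddCommGroup X] [NormedSpace ℝ X]
    (n : ℕ) (hn : 0 < n) (x : Fin n → X) (hx0 : ∀ j, x j ≠ 0)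
    (a : X) (ha : ‖a‖ = 1) (hx : ∀ j, ‖x j - a‖ ≤ 1)
    (p : Fin n → ℝ) (hp : ∀ j, 0 ≤ p j) (hp1 : ∑ j, p j = 1)
    (hpos : 0 < ∑ j, p j * ‖x j‖) :
    ‖∑ j, p j • x j‖ / (∑ j, p j * ‖x j‖) ≥
      (1 / 2) * (Finset.univ.inf' (Finset.univ_nonempty_iff.mpr ⟨⟨0, hn⟩⟩)
        (fun j => (1 - ‖x j - a‖ ^ 2) / ‖x j‖)) := by
  have ha0 : a ≠ 0 := by
    intro h; rw [h, norm_zero] at ha; norm_num at ha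
  obtain ⟨f, hf1, hfa⟩ := exists_dual_vector ℝ a (norm_ne_zero_iff.mpr ha0)
  have hfa' : f a = 1 := by rw [ha] at hfa; exact_mod_cast hfa
  set m := Finset.univ.inf' (Finset.univ_nonempty_iff.mpr ⟨⟨0, hn⟩⟩)
    (fun j => (1 - ‖x j - a‖ ^ 2) / ‖x j‖) with hm
  rw [ge_iff_le, le_div_iff₀ hpos]
  have key : ∀ j, p j * ((1/2) * m * ‖x j‖) ≤ p j * f (x j) := by
    intro j
    apply mul_le_mul_of_nonneg_left _ (hp j)
    have hxj : 0 < ‖x j‖ := norm_pos_iff.mpr (hx0 j)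
    have hmle : m ≤ (1 - ‖x j - a‖ ^ 2) / ‖x j‖ :=
      Finset.inf'_le _ (Finset.mem_univ j)
    have h1 : m * ‖x j‖ ≤ 1 - ‖x j - a‖ ^ 2 := by
      rw [← le_div_iff₀ hxj]; exact hmle
    have hfs : f a - f (x j) ≤ ‖x j - a‖ := by
      calc f a - f (x j) = f (a - x j) := by rw [map_sub]
        _ ≤ |f (a - x j)| := le_abs_self _
        _ ≤ ‖f‖ * ‖a - x j‖ := f.le_opNorm _
        _ = ‖x j - a‖ := by rw [hf1, one_mul, norm_sub_rev]
    have ht := hx j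
    have ht0 : 0 ≤ ‖x j - a‖ := norm_nonneg _
    nlinarith [hfa']
  calc (1/2) * m * (∑ j, p j * ‖x j‖)
      = ∑ j, p j * ((1/2) * m * ‖x j‖) := by
        rw [Finset.mul_sum]; exact Finset.sum_congr rfl fun j _ => by ring
    _ ≤ ∑ j, p j * f (x j) := Finset.sum_le_sum fun j _ => key j
    _ = f (∑ j, p j • x j) := by
        rw [map_sum]; exact Finset.sum_congr rfl fun j _ => (f.map_smul _ _).symm
    _ ≤ ‖∑ j, p j • x j‖ := by
        calc f (∑ j, p j • x j) ≤ |f (∑ j, p j • x j)| := le_abs_self _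
          _ ≤ ‖f‖ * ‖∑ j, p j • x j‖ := f.le_opNorm _
          _ = ‖∑ j, p j • x j‖ := by rw [hf1, one_mul]
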